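/- Jet fibers of the node: Let k be a field of characteristic zero, m ≥ 1, and consider the polynomial ring k[x₀,…,x_m, y₀,…,y_m] in 2(m+1) variables. Let J be the ideal generated by x₀, y₀, and the polynomials c_l = Σ_{a+b=l} x_a·y_b for 0 ≤ l ≤ m. Then the radical of J equals the intersection, over all pairs (i, j) with i, j ≥ 1 and i + j = m + 1, of the ideals (x₀, …, x_{i−1}, y₀, …, y_{j−1}); in particular PrimeSpectrum of the quotient ring (the fiber of the m-th jet scheme of the node xy = 0 over the origin) has exactly m irreducible components. -/

import Mathlib

open MvPolynomial

section Aux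

variable {k : Type*} [CommRing k] {σ : Type*}

lemma sub_aeval_mem_span (s : Set σ) [DecidablePred (· ∈ s)] (f : MvPolynomial σ k) :
    f - aeval (fun i => if i ∈ s then 0 else X i) f ∈
      Ideal.span (X '' s : Set (MvPolynomial σ k)) := by
  induction f using MvPolynomial.induction_on with
  | C a => simp
  | add p q hp hq =>
      rw [map_add, show p + q - ((aeval fun i => if i ∈ s then 0 else X i) p +
        (aeval fun i => if i ∈ s then 0 else X i) q) =
        (p - (aeval fun i => if i ∈ s then 0 else X i) p) +
        (q - (aeval fun i => if i ∈ s then 0 else X i) q) by ring]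
      exact Ideal.add_mem _ hp hq
  | mul_X p i hp =>
      rw [map_mul, aeval_X]
      by_cases hi : i ∈ s
      · rw [if_pos hi, mul_zero, sub_zero]
        exact Ideal.mul_mem_left _ p (Ideal.subset_span ⟨i, hi, rfl⟩)
      · rw [if_neg hi, show p * X i - (aeval fun i => if i ∈ s then 0 else X i) p * X i =
          (p - (aeval fun i => if i ∈ s then 0 else X i) p) * X i by ring]
        exact Ideal.mul_mem_right _ _ hp

lemma span_X_isPrime [IsDomain k] (s : Set σ) :
    (Ideal.span (X '' s : Set (MvPolynomial σ k))).IsPrime := by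
  classical
  have h : Ideal.span (X '' s : Set (MvPolynomial σ k)) =
      RingHom.ker (aeval (fun i => if i ∈ s then (0 : MvPolynomial σ k) else X i)) := by
    apply le_antisymm
    · rw [Ideal.span_le]
      rintro _ ⟨i, hi, rfl⟩
      simp [RingHom.mem_ker, hi]
    · intro f hf
      rw [RingHom.mem_ker] at hf
      have h2 := sub_aeval_mem_span s f
      rwa [hf, sub_zero] at h2
  rw [h]
  exact RingHom.ker_isPrime _

lemma X_mem_span_X_iff [Nontrivial k] (s : Set σ) (v : σ) :
    (X v : MvPolynomial σ k) ∈ Ideal.span (X '' s : Set (MvPolynomial σ k)) ↔ v ∈ s := by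
  rw [mem_ideal_span_X_image]
  constructor
  · intro h
    obtain ⟨i, his, hi⟩ := h (Finsupp.single v 1) (by rw [support_X]; simp)
    rwa [show i = v by by_contra hne; exact hi (Finsupp.single_eq_of_ne hne)] at his
  · intro hv μ hμ
    rw [support_X, Finset.mem_singleton] at hμ
    exact ⟨v, hv, by simp [hμ]⟩

lemma monomial_eq_X_mul {μ : σ →₀ ℕ} {c : k} {v : σ} (hv : μ v ≠ 0) :
    ∃ ν, (monomial μ c : MvPolynomial σ k) = X v * monomial ν c := by
  refine ⟨μ - Finsupp.single v 1, ?_⟩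
  have hμ : μ = Finsupp.single v 1 + (μ - Finsupp.single v 1) := by
    apply Finsupp.ext
    intro w
    simp only [Finsupp.add_apply, Finsupp.tsub_apply]
    by_cases hw : v = w
    · subst hw; simp only [Finsupp.single_eq_same]; omega
    · simp only [Finsupp.single_eq_of_ne (Ne.symm hw)]; omega
  conv_lhs => rw [hμ]
  rw [monomial_single_add, pow_one]

lemma monomial_eq_X_mul_X_mul {μ : σ →₀ ℕ} {c : k} {v w : σ} (hvw : v ≠ w)
    (hv : μ v ≠ 0) (hw : μ w ≠ 0) :
    ∃ ν, (monomial μ c : MvPolynomial σ k) = (X v * X w) * monomial ν c := by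
  refine ⟨μ - Finsupp.single v 1 - Finsupp.single w 1, ?_⟩
  have hμ : μ = Finsupp.single v 1 +
      (Finsupp.single w 1 + (μ - Finsupp.single v 1 - Finsupp.single w 1)) := by
    apply Finsupp.ext
    intro u
    simp only [Finsupp.add_apply, Finsupp.tsub_apply]
    by_cases hu : v = u
    · subst hu
      rw [Finsupp.single_eq_same, Finsupp.single_eq_of_ne hvw]
      omega
    · rw [Finsupp.single_eq_of_ne (Ne.symm hu)]
      by_cases hu' : w = u
      · subst hu'; rw [Finsupp.single_eq_same]; omega
      · rw [Finsupp.single_eq_of_ne (Ne.symm hu')]; omega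
  conv_lhs => rw [hμ]
  rw [monomial_single_add, monomial_single_add, pow_one, pow_one, mul_assoc]

lemma node_nilpotent {R : Type*} [CommRing R] (I : Ideal R) (x y : ℕ → R) (m : ℕ)
    (hc : ∀ l ≤ m, (∑ a ∈ Finset.range (l + 1), x a * y (l - a)) ∈ I) :
    ∀ l ≤ m, ∀ a b : ℕ, a + b = l → x a * y b ∈ I.radical := by
  intro l
  induction l using Nat.strong_induction_on with
  | _ l IH =>
    intro hl a b hab
    have hs : (x a * y b) * (∑ a' ∈ Finset.range (l + 1), x a' * y (l - a')) ∈ I.radical :=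
      Ideal.mul_mem_left _ _ (I.le_radical (hc l hl))
    rw [Finset.mul_sum, ← Finset.sum_erase_add _ _ (show a ∈ Finset.range (l+1) by
      simp; omega)] at hs
    have hrest : (∑ a' ∈ (Finset.range (l + 1)).erase a,
        x a * y b * (x a' * y (l - a'))) ∈ I.radical := by
      apply Ideal.sum_mem
      intro a' ha'
      rw [Finset.mem_erase, Finset.mem_range] at ha'
      rcases lt_or_gt_of_ne ha'.1 with h | h
      · rw [show x a * y b * (x a' * y (l - a')) = x a' * y b * (x a * y (l - a')) by ring]
        exact Ideal.mul_mem_right _ _ (IH (a' + b) (by omega) (by omega) a' b rfl)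
      · rw [show x a * y b * (x a' * y (l - a')) = x a * y (l - a') * (x a' * y b) by ring]
        exact Ideal.mul_mem_right _ _ (IH (a + (l - a')) (by omega) (by omega) a (l - a') rfl)
    have hsq : x a * y b * (x a * y (l - a)) ∈ I.radical :=
      (Submodule.add_mem_iff_right _ hrest).mp hs
    rw [show l - a = b by omega] at hsq
    exact Ideal.mem_radical_of_pow_mem (m := 2) (by rwa [pow_two])

end Aux

section NodeDefs

variable (k : Type*) [CommRing k]

/-- The set of variables `x_a (a < i)`, `y_b (b < j)`. -/
def nodeVars (m i j : ℕ) : Set (Fin 2 × Fin (m + 1)) :=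
  {v | (v.1 = 0 ∧ v.2.1 < i) ∨ (v.1 = 1 ∧ v.2.1 < j)}

/-- The ideal generated by the variables `x_a (a < i)`, `y_b (b < j)`. -/
noncomputable def nodeP (m i j : ℕ) : Ideal (MvPolynomial (Fin 2 × Fin (m + 1)) k) :=
  Ideal.span (X '' nodeVars m i j)

end NodeDefs

section NodeLemmas

variable (k : Type*) [CommRing k] [IsDomain k]

lemma nodeP_isPrime (m i j : ℕ) : (nodeP k m i j).IsPrime := span_X_isPrime _

lemma X_mem_nodeP (m i j : ℕ) (v : Fin 2 × Fin (m + 1)) :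
    X v ∈ nodeP k m i j ↔ (v.1 = 0 ∧ v.2.1 < i) ∨ (v.1 = 1 ∧ v.2.1 < j) :=
  X_mem_span_X_iff _ _

end NodeLemmas

theorem node_jet_fiber_components (k : Type*) [Field k] [CharZero k] (m : ℕ) (hm : 1 ≤ m)
    (J : Ideal (MvPolynomial (Fin 2 × Fin (m + 1)) k))
    (hJ : J = Ideal.span
      ({X ((0 : Fin 2), (0 : Fin (m + 1))), X ((1 : Fin 2), (0 : Fin (m + 1)))} ∪
        {g | ∃ l : Fin (m + 1), g =
          ∑ a : Fin (l.val + 1),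
            X ((0 : Fin 2), (⟨a.val, by have := a.isLt; have := l.isLt; omega⟩ : Fin (m + 1))) *
            X ((1 : Fin 2),
                (⟨l.val - a.val, by have := l.isLt; omega⟩ : Fin (m + 1)))})) :
    J.radical =
      (⨅ (i : ℕ) (j : ℕ) (_ : 1 ≤ i) (_ : 1 ≤ j) (_ : i + j = m + 1),
        Ideal.span
          ({g | ∃ a : Fin (m + 1), a.val < i ∧ g = X ((0 : Fin 2), a)} ∪
           {g | ∃ b : Fin (m + 1), b.val < j ∧ g = X ((1 : Fin 2), b)})) ∧
    (irreducibleComponents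
        (PrimeSpectrum (MvPolynomial (Fin 2 × Fin (m + 1)) k ⧸ J))).Finite ∧
    (irreducibleComponents
        (PrimeSpectrum (MvPolynomial (Fin 2 × Fin (m + 1)) k ⧸ J))).ncard = m := by
  classical
  -- rewrite the spans appearing in the statement as `nodeP`
  have hspan : ∀ i j : ℕ,
      Ideal.span ({g | ∃ a : Fin (m + 1), a.val < i ∧ g = X ((0 : Fin 2), a)} ∪
        {g | ∃ b : Fin (m + 1), b.val < j ∧ g = X ((1 : Fin 2), b)}) = nodeP k m i j := by
    intro i j
    unfold nodeP
    congr 1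
    ext g
    simp only [Set.mem_union, Set.mem_setOf_eq, Set.mem_image, nodeVars]
    constructor
    · rintro (⟨a, ha, rfl⟩ | ⟨b, hb, rfl⟩)
      · exact ⟨(0, a), Or.inl ⟨rfl, ha⟩, rfl⟩
      · exact ⟨(1, b), Or.inr ⟨rfl, hb⟩, rfl⟩
    · rintro ⟨⟨c, w⟩, (⟨hc, hw⟩ | ⟨hc, hw⟩), rfl⟩
      · exact Or.inl ⟨w, hw, by rw [show c = 0 from hc]⟩
      · exact Or.inr ⟨w, hw, by rw [show c = 1 from hc]⟩
  -- `J` is contained in each `nodeP k m i j`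
  have hJle : ∀ i j : ℕ, 1 ≤ i → 1 ≤ j → i + j = m + 1 → J ≤ nodeP k m i j := by
    intro i j h1 h2 h3
    rw [hJ, Ideal.span_le]
    rintro g (hg | ⟨l, rfl⟩)
    · rcases hg with rfl | rfl
      · exact Ideal.subset_span ⟨((0 : Fin 2), (0 : Fin (m + 1))), Or.inl ⟨rfl, show (0:ℕ) < i by omega⟩, rfl⟩
      · exact Ideal.subset_span ⟨((1 : Fin 2), (0 : Fin (m + 1))), Or.inr ⟨rfl, show (0:ℕ) < j by omega⟩, rfl⟩
    · apply Ideal.sum_mem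
      intro a _
      by_cases hai : (a : ℕ) < i
      · exact Ideal.mul_mem_right _ _ (Ideal.subset_span
          ⟨((0 : Fin 2), ⟨a.val, by have := a.isLt; have := l.isLt; omega⟩),
            Or.inl ⟨rfl, hai⟩, rfl⟩)
      · have hlt : l.val - a.val < j := by have := l.isLt; omega
        exact Ideal.mul_mem_left _ _ (Ideal.subset_span
          ⟨((1 : Fin 2), ⟨l.val - a.val, by have := l.isLt; omega⟩),
            Or.inr ⟨rfl, hlt⟩, rfl⟩)
  -- the key nilpotence fact : `x_a y_b ∈ √J` whenever `a + b ≤ m`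
  have hkey : ∀ a b : Fin (m + 1), (a : ℕ) + (b : ℕ) ≤ m →
      (X ((0 : Fin 2), a) * X ((1 : Fin 2), b) : MvPolynomial (Fin 2 × Fin (m + 1)) k)
        ∈ J.radical := by
    set x : ℕ → MvPolynomial (Fin 2 × Fin (m + 1)) k :=
      fun a => if h : a < m + 1 then X ((0 : Fin 2), ⟨a, h⟩) else 0 with hx
    set y : ℕ → MvPolynomial (Fin 2 × Fin (m + 1)) k :=
      fun b => if h : b < m + 1 then X ((1 : Fin 2), ⟨b, h⟩) else 0 with hy
    have hc : ∀ l ≤ m, (∑ a ∈ Finset.range (l + 1), x a * y (l - a)) ∈ J := by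
      intro l hl
      have hgen : (∑ a : Fin (l + 1),
          X ((0 : Fin 2), (⟨a.val, by have := a.isLt; omega⟩ : Fin (m + 1))) *
          X ((1 : Fin 2), (⟨l - a.val, by omega⟩ : Fin (m + 1)))) ∈ J := by
        rw [hJ]
        exact Ideal.subset_span (Or.inr ⟨⟨l, by omega⟩, rfl⟩)
      have heq : ∀ a : Fin (l + 1), x a.val * y (l - a.val) =
          X ((0 : Fin 2), (⟨a.val, by have := a.isLt; omega⟩ : Fin (m + 1))) *
          X ((1 : Fin 2), (⟨l - a.val, by omega⟩ : Fin (m + 1))) := by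
        intro a
        have h1 : (a : ℕ) < m + 1 := by have := a.isLt; omega
        have h2 : l - (a : ℕ) < m + 1 := by omega
        rw [hx, hy]
        simp only [dif_pos h1, dif_pos h2]
      rw [← Fin.sum_univ_eq_sum_range, Finset.sum_congr rfl (fun a _ => heq a)]
      exact hgen
    intro a b hab
    have h := node_nilpotent J x y m hc ((a : ℕ) + (b : ℕ)) hab a.val b.val rfl
    rw [hx, hy] at h
    simp only [dif_pos a.isLt, dif_pos b.isLt, Fin.eta] at h
    exact h
  -- the infimum as a finite inf
  have hIcc : (⨅ (i : ℕ) (j : ℕ) (_ : 1 ≤ i) (_ : 1 ≤ j) (_ : i + j = m + 1), nodeP k m i j) =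
      (Finset.Icc 1 m).inf (fun i => nodeP k m i (m + 1 - i)) := by
    apply le_antisymm
    · apply Finset.le_inf
      intro i hi
      rw [Finset.mem_Icc] at hi
      exact iInf_le_of_le i (iInf_le_of_le (m + 1 - i) (iInf_le_of_le (by omega)
        (iInf_le_of_le (by omega) (iInf_le_of_le (by omega) le_rfl))))
    · refine le_iInf fun i => le_iInf fun j => le_iInf fun h1 => le_iInf fun h2 =>
        le_iInf fun h3 => ?_
      have hj : j = m + 1 - i := by omega
      subst hj
      exact Finset.inf_le (Finset.mem_Icc.mpr ⟨h1, by omega⟩)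
  -- the radical computation
  have hrad : J.radical = (Finset.Icc 1 m).inf (fun i => nodeP k m i (m + 1 - i)) := by
    apply le_antisymm
    · apply Finset.le_inf
      intro i hi
      rw [Finset.mem_Icc] at hi
      calc J.radical ≤ (nodeP k m i (m + 1 - i)).radical :=
            Ideal.radical_mono (hJle i (m + 1 - i) (by omega) (by omega) (by omega))
        _ = nodeP k m i (m + 1 - i) := (nodeP_isPrime k m i (m + 1 - i)).radical
    · intro f hf
      have hf' : ∀ i ∈ Finset.Icc 1 m, ∀ μ ∈ f.support, ∃ v : Fin 2 × Fin (m + 1),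
          ((v.1 = 0 ∧ v.2.1 < i) ∨ (v.1 = 1 ∧ v.2.1 < m + 1 - i)) ∧ μ v ≠ 0 := by
        intro i hi μ hμ
        have h := Submodule.mem_finsetInf.mp hf i hi
        rw [nodeP, mem_ideal_span_X_image] at h
        obtain ⟨v, hv1, hv2⟩ := h μ hμ
        exact ⟨v, hv1, hv2⟩
      rw [f.as_sum]
      apply Ideal.sum_mem
      intro μ hμ
      by_cases h00 : μ ((0 : Fin 2), (0 : Fin (m + 1))) ≠ 0
      · obtain ⟨ν, hν⟩ := monomial_eq_X_mul (c := coeff μ f) h00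
        rw [hν]
        refine Ideal.mul_mem_right _ _ (Ideal.le_radical ?_)
        rw [hJ]
        exact Ideal.subset_span (Or.inl (Set.mem_insert _ _))
      by_cases h10 : μ ((1 : Fin 2), (0 : Fin (m + 1))) ≠ 0
      · obtain ⟨ν, hν⟩ := monomial_eq_X_mul (c := coeff μ f) h10
        rw [hν]
        refine Ideal.mul_mem_right _ _ (Ideal.le_radical ?_)
        rw [hJ]
        exact Ideal.subset_span (Or.inl (Set.mem_insert_of_mem _ rfl))
      push_neg at h00 h10
      -- find a minimal x-index
      obtain ⟨v, hv, hvne⟩ := hf' m (Finset.mem_Icc.mpr ⟨hm, le_rfl⟩) μ hμ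
      have ha0 : ∃ a : Fin (m + 1), μ ((0 : Fin 2), a) ≠ 0 := by
        rcases hv with ⟨hc, _⟩ | ⟨hc, hlt⟩
        · refine ⟨v.2, ?_⟩
          rwa [show ((0 : Fin 2), v.2) = v from by rw [← hc]]
        · exfalso
          apply hvne
          rw [show v = ((1 : Fin 2), (0 : Fin (m + 1))) from
            Prod.ext hc (Fin.ext (show (v.2 : ℕ) = 0 by omega))]
          exact h10
      set A : Finset (Fin (m + 1)) :=
        Finset.univ.filter (fun a : Fin (m + 1) => μ ((0 : Fin 2), a) ≠ 0) with hA
      have hAne : A.Nonempty := by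
        obtain ⟨a, ha⟩ := ha0
        exact ⟨a, Finset.mem_filter.mpr ⟨Finset.mem_univ _, ha⟩⟩
      set a0 : Fin (m + 1) := A.min' hAne with ha0def
      have hamem : μ ((0 : Fin 2), a0) ≠ 0 :=
        (Finset.mem_filter.mp (A.min'_mem hAne)).2
      have ha1 : 1 ≤ (a0 : ℕ) := by
        by_contra h
        exact hamem (by rw [show a0 = 0 from Fin.ext (show (a0 : ℕ) = 0 by omega)]; exact h00)
      obtain ⟨w, hw, hwne⟩ := hf' (a0 : ℕ)
        (Finset.mem_Icc.mpr ⟨ha1, by have := a0.isLt; omega⟩) μ hμ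
      rcases hw with ⟨hc, hlt⟩ | ⟨hc, hlt⟩
      · exfalso
        have hw2 : w.2 ∈ A := Finset.mem_filter.mpr ⟨Finset.mem_univ _, by
          rwa [show ((0 : Fin 2), w.2) = w from by rw [← hc]]⟩
        have := A.min'_le w.2 hw2
        rw [← ha0def] at this
        exact absurd hlt (by have := Fin.le_def.mp this; omega)
      · have hwne' : μ ((1 : Fin 2), w.2) ≠ 0 := by
          rwa [show ((1 : Fin 2), w.2) = w from by rw [← hc]]
        obtain ⟨ν, hν⟩ := monomial_eq_X_mul_X_mul (c := coeff μ f)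
          (v := ((0 : Fin 2), a0)) (w := ((1 : Fin 2), w.2))
          (by simp) hamem hwne'
        rw [hν]
        exact Ideal.mul_mem_right _ _
          (hkey a0 w.2 (by have := a0.isLt; have := w.2.isLt; omega))
  -- first conjunct
  have hgoal1 : J.radical =
      (⨅ (i : ℕ) (j : ℕ) (_ : 1 ≤ i) (_ : 1 ≤ j) (_ : i + j = m + 1),
        Ideal.span
          ({g | ∃ a : Fin (m + 1), a.val < i ∧ g = X ((0 : Fin 2), a)} ∪
           {g | ∃ b : Fin (m + 1), b.val < j ∧ g = X ((1 : Fin 2), b)})) := by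
    simp only [hspan]
    rw [hIcc]
    exact hrad
  -- incomparability of the `nodeP`s
  have hFle : ∀ i ∈ Finset.Icc 1 m, ∀ i' ∈ Finset.Icc 1 m,
      nodeP k m i (m + 1 - i) ≤ nodeP k m i' (m + 1 - i') → i = i' := by
    intro i hi i' hi' hle
    rw [Finset.mem_Icc] at hi hi'
    by_contra hne
    rcases lt_or_gt_of_ne hne with h | h
    · -- i < i' : X (1, m+1-i') lies in the first but not the second
      have hmem : (X ((1 : Fin 2), (⟨m + 1 - i', by omega⟩ : Fin (m + 1)))
          : MvPolynomial (Fin 2 × Fin (m + 1)) k) ∈ nodeP k m i (m + 1 - i) :=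
        (X_mem_nodeP k m i (m + 1 - i) _).mpr (Or.inr ⟨rfl, show m + 1 - i' < m + 1 - i by omega⟩)
      have := (X_mem_nodeP k m i' (m + 1 - i') _).mp (hle hmem)
      rcases this with ⟨h0, _⟩ | ⟨_, hlt⟩
      · simp at h0
      · exact absurd (show m + 1 - i' < m + 1 - i' from hlt) (lt_irrefl _)
    · -- i > i' : X (0, i') lies in the first but not the second
      have hmem : (X ((0 : Fin 2), (⟨i', by omega⟩ : Fin (m + 1)))
          : MvPolynomial (Fin 2 × Fin (m + 1)) k) ∈ nodeP k m i (m + 1 - i) :=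
        (X_mem_nodeP k m i (m + 1 - i) _).mpr (Or.inl ⟨rfl, show i' < i by omega⟩)
      have := (X_mem_nodeP k m i' (m + 1 - i') _).mp (hle hmem)
      rcases this with ⟨_, hlt⟩ | ⟨h0, _⟩
      · exact absurd (show i' < i' from hlt) (lt_irrefl _)
      · simp at h0
  -- minimal primes of J
  have hmin : J.minimalPrimes =
      (fun i => nodeP k m i (m + 1 - i)) '' ↑(Finset.Icc 1 m) := by
    ext q
    constructor
    · intro hq
      have hq1 : q.IsPrime := hq.1.1
      have hq2 : J ≤ q := hq.1.2
      have hradq : J.radical ≤ q := by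
        calc J.radical ≤ q.radical := Ideal.radical_mono hq2
          _ = q := hq1.radical
      rw [hrad] at hradq
      obtain ⟨i, hi, hFq⟩ := (hq1.inf_le').mp hradq
      have hqF : q ≤ nodeP k m i (m + 1 - i) := by
        rw [Finset.mem_Icc] at hi
        exact hq.2 ⟨nodeP_isPrime k m i (m + 1 - i),
          hJle i (m + 1 - i) (by omega) (by omega) (by omega)⟩ hFq
      exact ⟨i, hi, le_antisymm hFq hqF⟩
    · rintro ⟨i, hi, rfl⟩
      rw [Finset.mem_coe, Finset.mem_Icc] at hi
      refine ⟨⟨nodeP_isPrime k m i (m + 1 - i),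
        hJle i (m + 1 - i) (by omega) (by omega) (by omega)⟩, ?_⟩
      intro q hq hle
      have hradq : J.radical ≤ q := by
        calc J.radical ≤ q.radical := Ideal.radical_mono hq.2
          _ = q := hq.1.radical
      rw [hrad] at hradq
      obtain ⟨i', hi', hFq⟩ := (hq.1.inf_le').mp hradq
      have : i' = i := hFle i' hi' i (Finset.mem_Icc.mpr hi) (hFq.trans hle)
      rw [← this]
      exact hFq
  -- cardinality of the minimal primes
  have hinj : Set.InjOn (fun i => nodeP k m i (m + 1 - i)) ↑(Finset.Icc 1 m) := by
    intro i hi i' hi' h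
    exact hFle i (Finset.mem_coe.mp hi) i' (Finset.mem_coe.mp hi') (le_of_eq h)
  have hminfin : J.minimalPrimes.Finite := by
    rw [hmin]
    exact Set.Finite.image _ (Finset.finite_toSet _)
  have hmincard : J.minimalPrimes.ncard = m := by
    rw [hmin, Set.ncard_image_of_injOn hinj, Set.ncard_coe_finset, Nat.card_Icc]
    omega
  -- transfer to the quotient ring
  have hcomap := Ideal.minimalPrimes_eq_comap (I := J)
  have hcinj : Function.Injective
      (Ideal.comap (Ideal.Quotient.mk J) :
        Ideal (MvPolynomial (Fin 2 × Fin (m + 1)) k ⧸ J) →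
        Ideal (MvPolynomial (Fin 2 × Fin (m + 1)) k)) :=
    Ideal.comap_injective_of_surjective _ Ideal.Quotient.mk_surjective
  have hQfin : (minimalPrimes (MvPolynomial (Fin 2 × Fin (m + 1)) k ⧸ J)).Finite := by
    apply Set.Finite.of_finite_image _ hcinj.injOn
    rw [← hcomap]
    exact hminfin
  have hQcard : (minimalPrimes (MvPolynomial (Fin 2 × Fin (m + 1)) k ⧸ J)).ncard = m := by
    rw [← Set.ncard_image_of_injective _ hcinj, ← hcomap]
    exact hmincard
  -- transfer to irreducible components
  have e := (minimalPrimes.equivIrreducibleComponents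
    (MvPolynomial (Fin 2 × Fin (m + 1)) k ⧸ J)).toEquiv
  have e2 : minimalPrimes (MvPolynomial (Fin 2 × Fin (m + 1)) k ⧸ J) ≃
      (irreducibleComponents
        (PrimeSpectrum (MvPolynomial (Fin 2 × Fin (m + 1)) k ⧸ J))) :=
    e.trans OrderDual.ofDual
  refine ⟨hgoal1, ?_, ?_⟩
  · rw [← Set.finite_coe_iff]
    have : Finite (minimalPrimes (MvPolynomial (Fin 2 × Fin (m + 1)) k ⧸ J)) :=
      hQfin.to_subtype
    exact Finite.of_equiv _ e2
  · rw [← Nat.card_coe_set_eq, ← Nat.card_congr e2, Nat.card_coe_set_eq]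
    exact hQcard
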